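/- Let σ > 0, ω ∈ ℝ with ω ∉ πℚ, and let ψ_ℓ(k) := exp(ikℓω − (σ²/2)ℓk²) for ℓ ∈ ℕ₊, k ∈ ℤ. Let {z_k}_{k∈ℤ} be a bounded sequence of complex numbers. Then for every ℓ ≥ 1 the family {ψ_ℓ(k) z_k}_{k∈ℤ} is absolutely summable, and if ∑_{k∈ℤ} ψ_ℓ(k) z_k = 0 for all ℓ ≥ 1, then z_k = 0 for every k ∈ ℤ. -/

import Mathlib

open Real Filter Topology

noncomputable section

/-- `ψ_ℓ(k) = exp(ikℓω − (σ²/2)ℓk²)`, the characteristic function at `k` of a Gaussian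
with mean `ℓω` and variance `ℓσ²`. -/
def psiCF (ω σ : ℝ) (ℓ : ℕ) (k : ℤ) : ℂ :=
  Complex.exp (Complex.I * (k : ℂ) * (ℓ : ℂ) * (ω : ℂ) -
    ((σ ^ 2 : ℝ) : ℂ) / 2 * (ℓ : ℂ) * (k : ℂ) ^ 2)

lemma summable_gauss (a : ℝ) (ha : 0 < a) : Summable (fun k : ℤ => Real.exp (-(a * k^2))) := by
  have hr : Real.exp (-a) < 1 := by rw [Real.exp_lt_one_iff]; linarith
  have hg : Summable (fun n : ℕ => Real.exp (-a) ^ n) :=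
    summable_geometric_of_lt_one (by positivity) hr
  have hb : Summable (fun k : ℤ => Real.exp (-a) ^ k.natAbs) :=
    Summable.of_nat_of_neg (by simpa using hg) (by simpa using hg)
  refine hb.of_nonneg_of_le (fun k => (exp_pos _).le) (fun k => ?_)
  rw [← Real.exp_nat_mul]
  apply Real.exp_le_exp.2
  have h2 : (k:ℝ)^2 = ((k.natAbs:ℝ))^2 := by
    rw [Nat.cast_natAbs]; push_cast; rw [sq_abs]
  have h3 : (k.natAbs : ℝ) ≤ ((k.natAbs:ℝ))^2 := by
    exact_mod_cast Nat.le_self_pow two_ne_zero k.natAbs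
  rw [h2]
  nlinarith [h3, sq_nonneg ((k.natAbs:ℝ))]

lemma norm_psiCF (ω σ : ℝ) (ℓ : ℕ) (k : ℤ) :
    ‖psiCF ω σ ℓ k‖ = Real.exp (-(σ^2/2 * ℓ * k^2)) := by
  have h : Complex.I * (k : ℂ) * (ℓ : ℂ) * (ω : ℂ) -
      ((σ ^ 2 : ℝ) : ℂ) / 2 * (ℓ : ℂ) * (k : ℂ) ^ 2
      = ((-(σ^2/2 * ℓ * k^2) : ℝ) : ℂ) + ((k * ℓ * ω : ℝ) : ℂ) * Complex.I := by
    push_cast; ring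
  rw [psiCF, h, Complex.norm_exp, Complex.add_re, Complex.ofReal_re,
    Complex.mul_re, Complex.I_re, Complex.I_im, Complex.ofReal_im]
  ring_nf

lemma psiCF_mul_exp (ω σ : ℝ) (ℓ : ℕ) (k : ℤ) :
    ((Real.exp (σ^2/2 * ℓ * k^2) : ℝ) : ℂ) * psiCF ω σ ℓ k
      = Complex.exp (((k * ℓ * ω : ℝ):ℂ) * Complex.I) := by
  rw [psiCF, Complex.ofReal_exp, ← Complex.exp_add]
  congr 1
  push_cast; ring

lemma psiCF_mul_exp' (ω σ : ℝ) (ℓ : ℕ) (k : ℤ) (E : ℝ)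
    (hE : E = Real.exp (σ^2/2 * ℓ * (k:ℝ)^2)) (x : ℝ) (hx : x = k * ℓ * ω) :
    ((E:ℝ):ℂ) * psiCF ω σ ℓ k = Complex.exp (((x:ℝ):ℂ) * Complex.I) := by
  subst hE hx
  exact psiCF_mul_exp ω σ ℓ k

lemma key_limit (θ : ℝ) (hθ : Complex.exp (((2*θ:ℝ):ℂ) * Complex.I) ≠ 1) (c d : ℂ)
    (h : Tendsto (fun ℓ : ℕ => ‖Complex.exp (((θ * ℓ :ℝ):ℂ) * Complex.I) * c +
      Complex.exp (((-(θ * ℓ) :ℝ):ℂ) * Complex.I) * d‖) atTop (𝓝 0)) : c = 0 ∧ d = 0 := by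
  set u : ℕ → ℂ := fun ℓ => Complex.exp (((2*(θ*ℓ) :ℝ):ℂ) * Complex.I) * c + d with hu
  have hnorm : ∀ ℓ : ℕ, ‖u ℓ‖ = ‖Complex.exp (((θ * ℓ :ℝ):ℂ) * Complex.I) * c +
      Complex.exp (((-(θ * ℓ) :ℝ):ℂ) * Complex.I) * d‖ := by
    intro ℓ
    have e1 : Complex.exp (((θ * ℓ :ℝ):ℂ) * Complex.I) * (Complex.exp (((θ * ℓ :ℝ):ℂ) * Complex.I) * c)
        = Complex.exp (((2*(θ*ℓ) :ℝ):ℂ) * Complex.I) * c := by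
      rw [← mul_assoc, ← Complex.exp_add]
      congr 2
      push_cast; ring
    have e2 : Complex.exp (((θ * ℓ :ℝ):ℂ) * Complex.I) * (Complex.exp (((-(θ * ℓ) :ℝ):ℂ) * Complex.I) * d)
        = d := by
      rw [← mul_assoc, ← Complex.exp_add,
        show ((θ * ℓ :ℝ):ℂ) * Complex.I + ((-(θ * ℓ) :ℝ):ℂ) * Complex.I = 0 by push_cast; ring,
        Complex.exp_zero, one_mul]
    have huℓ : u ℓ = Complex.exp (((θ * ℓ :ℝ):ℂ) * Complex.I) *
        (Complex.exp (((θ * ℓ :ℝ):ℂ) * Complex.I) * c +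
         Complex.exp (((-(θ * ℓ) :ℝ):ℂ) * Complex.I) * d) := by
      rw [hu, mul_add, e1, e2]
    rw [huℓ, norm_mul, Complex.norm_exp_ofReal_mul_I, one_mul]
  have hu0 : Tendsto u atTop (𝓝 0) := by
    rw [tendsto_zero_iff_norm_tendsto_zero]
    simpa only [hnorm] using h
  have hshift : Tendsto (fun ℓ => u (ℓ+1) - u ℓ) atTop (𝓝 0) := by
    simpa using (hu0.comp (tendsto_add_atTop_nat 1)).sub hu0
  have hval : ∀ ℓ : ℕ, u (ℓ+1) - u ℓ =
      Complex.exp (((2*(θ*ℓ) :ℝ):ℂ) * Complex.I) * ((Complex.exp (((2*θ:ℝ):ℂ) * Complex.I) - 1) * c) := by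
    intro ℓ
    have e3 : Complex.exp (((2*(θ*(ℓ+1:ℕ)) :ℝ):ℂ) * Complex.I)
        = Complex.exp (((2*(θ*ℓ) :ℝ):ℂ) * Complex.I) * Complex.exp (((2*θ:ℝ):ℂ) * Complex.I) := by
      rw [← Complex.exp_add]; congr 1; push_cast; ring
    rw [hu]
    simp only [e3]
    ring
  have hnorm2 : Tendsto (fun ℓ : ℕ => ‖(Complex.exp (((2*θ:ℝ):ℂ) * Complex.I) - 1) * c‖) atTop (𝓝 0) := by
    have := (tendsto_zero_iff_norm_tendsto_zero.mp hshift)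
    refine Tendsto.congr (fun ℓ => ?_) this
    rw [hval ℓ, norm_mul, Complex.norm_exp_ofReal_mul_I, one_mul]
  have hcz : (Complex.exp (((2*θ:ℝ):ℂ) * Complex.I) - 1) * c = 0 :=
    norm_eq_zero.mp (tendsto_nhds_unique tendsto_const_nhds hnorm2)
  have hc : c = 0 := by
    rcases mul_eq_zero.mp hcz with h1 | h2
    · exact absurd (sub_eq_zero.mp h1) hθ
    · exact h2
  refine ⟨hc, ?_⟩
  have hd : Tendsto (fun _ : ℕ => d) atTop (𝓝 (0:ℂ)) := by
    refine hu0.congr (fun ℓ => ?_)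
    rw [hu]; simp [hc]
  exact tendsto_nhds_unique tendsto_const_nhds hd

lemma step (σ ω : ℝ) (hσ : 0 < σ) (hω : ∀ q : ℚ, ω ≠ π * (q : ℝ))
    (z : ℤ → ℂ) (M : ℝ) (hM : ∀ k : ℤ, ‖z k‖ ≤ M)
    (hsum : ∀ ℓ : ℕ, 1 ≤ ℓ → Summable (fun k : ℤ => psiCF ω σ ℓ k * z k))
    (hzero : ∀ ℓ : ℕ, 1 ≤ ℓ → ∑' k : ℤ, psiCF ω σ ℓ k * z k = 0)
    (n : ℕ) (h0 : ∀ j : ℤ, j.natAbs < n → z j = 0) :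
    z n = 0 ∧ z (-(n:ℤ)) = 0 := by
  have hM0 : 0 ≤ M := (norm_nonneg _).trans (hM 0)
  set c : ℝ := σ^2/2 with hc
  have hcpos : 0 < c := by positivity
  set d : ℂ := if n = 0 then 0 else z (-(n:ℤ)) with hd
  set θ : ℝ := n * ω with hθdef
  set S : ℝ := ∑' j : ℤ, Real.exp (-(c * j^2)) with hS
  have hSsum : Summable (fun j : ℤ => Real.exp (-(c * j^2))) := summable_gauss c hcpos
  set K : ℕ → ℝ := fun ℓ => M * Real.exp (c * n^2) * Real.exp (-(c*(2*n+1)) * ((ℓ:ℝ)-1)) with hK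
  have hK0 : ∀ ℓ, 0 ≤ K ℓ := fun ℓ => by rw [hK]; positivity
  have key : ∀ ℓ : ℕ, 1 ≤ ℓ →
      ‖Complex.exp (((θ * ℓ :ℝ):ℂ) * Complex.I) * z n +
        Complex.exp (((-(θ * ℓ) :ℝ):ℂ) * Complex.I) * d‖ ≤ K ℓ * S := by
    intro ℓ hℓ
    set f : ℤ → ℂ := fun j => psiCF ω σ ℓ j * z j with hf
    have hs : Summable f := hsum ℓ hℓ
    set g1 : ℤ → ℂ := fun j => if j = (n:ℤ) then 0 else f j with hg1
    have hg1s : Summable g1 := by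
      refine (hs.update (n:ℤ) 0).congr (fun j => ?_)
      rw [Function.update_apply]
    set g2 : ℤ → ℂ := fun j => if j = -(n:ℤ) then 0 else g1 j with hg2
    have hg2s : Summable g2 := by
      refine (hg1s.update (-(n:ℤ)) 0).congr (fun j => ?_)
      rw [Function.update_apply]
    have h1 : ∑' j, f j = f n + ∑' j, g1 j := Summable.tsum_eq_add_tsum_ite hs (n:ℤ)
    have h2 : ∑' j, g1 j = g1 (-(n:ℤ)) + ∑' j, g2 j := Summable.tsum_eq_add_tsum_ite hg1s (-(n:ℤ))
    have hmain : f (n:ℤ) + g1 (-(n:ℤ)) = -(∑' j, g2 j) := by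
      have hz0 := hzero ℓ hℓ
      rw [hf] at *
      rw [h2] at h1
      rw [hz0] at h1
      linear_combination -h1
    set E : ℝ := Real.exp (c * ℓ * n^2) with hE
    have hEf : (E:ℂ) * f (n:ℤ) = Complex.exp (((θ * ℓ :ℝ):ℂ) * Complex.I) * z n := by
      rw [hf]
      simp only
      rw [← mul_assoc, psiCF_mul_exp' ω σ ℓ (n:ℤ) E (by rw [hE, hc]; push_cast; ring_nf)
        (θ * ℓ) (by rw [hθdef]; push_cast; ring)]
    have hEg : (E:ℂ) * g1 (-(n:ℤ)) = Complex.exp (((-(θ * ℓ) :ℝ):ℂ) * Complex.I) * d := by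
      rcases Nat.eq_zero_or_pos n with h | h
      · subst h
        simp [hg1, hd, hθdef, hf]
      · have hne : -(n:ℤ) ≠ (n:ℤ) := by omega
        have hdz : d = z (-(n:ℤ)) := by rw [hd, if_neg (by omega : ¬ n = 0)]
        rw [hg1]
        simp only [if_neg hne]
        rw [hf]
        simp only
        rw [← mul_assoc, psiCF_mul_exp' ω σ ℓ (-(n:ℤ)) E (by rw [hE, hc]; push_cast; ring_nf)
          (-(θ * ℓ)) (by rw [hθdef]; push_cast; ring), hdz]
    have hnorm_eq : ‖Complex.exp (((θ * ℓ :ℝ):ℂ) * Complex.I) * z n +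
        Complex.exp (((-(θ * ℓ) :ℝ):ℂ) * Complex.I) * d‖ = ‖∑' j, (E:ℂ) * g2 j‖ := by
      rw [← hEf, ← hEg, ← mul_add, hmain, mul_neg, norm_neg, tsum_mul_left]
    have hb : ∀ j : ℤ, ‖(E:ℂ) * g2 j‖ ≤ K ℓ * Real.exp (-(c * j^2)) := by
      intro j
      by_cases hj1 : j = -(n:ℤ)
      · rw [hg2]; simp only [if_pos hj1, mul_zero, norm_zero]
        have := hK0 ℓ
        positivity
      by_cases hj2 : j = (n:ℤ)
      · rw [hg2]; simp only [if_neg hj1, hg1, if_pos hj2, mul_zero, norm_zero]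
        have := hK0 ℓ
        positivity
      by_cases hj3 : j.natAbs < n
      · rw [hg2]; simp only [if_neg hj1, hg1, if_neg hj2, hf, h0 j hj3, mul_zero, norm_zero]
        have := hK0 ℓ
        positivity
      · have hjge : n + 1 ≤ j.natAbs := by
          rcases Nat.lt_or_ge j.natAbs (n+1) with h | h
          · exfalso
            have : j.natAbs = n := by omega
            rcases Int.natAbs_eq_iff.mp this with h' | h'
            · exact hj2 h'
            · exact hj1 h'
          · exact h
        have hjsq : ((n:ℝ)+1)^2 ≤ (j:ℝ)^2 := by
          have h2 : (j:ℝ)^2 = ((j.natAbs:ℝ))^2 := by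
            rw [Nat.cast_natAbs]; push_cast; rw [sq_abs]
          rw [h2]
          have : (n:ℝ) + 1 ≤ (j.natAbs:ℝ) := by exact_mod_cast hjge
          nlinarith
        rw [hg2]; simp only [if_neg hj1, hg1, if_neg hj2, hf]
        rw [norm_mul, norm_mul, norm_psiCF, Complex.norm_real, Real.norm_eq_abs,
          abs_of_pos (exp_pos _)]
        have hℓ1 : (1:ℝ) ≤ (ℓ:ℝ) := by exact_mod_cast hℓ
        have hexp : E * Real.exp (-(σ^2/2 * ℓ * (j:ℝ)^2)) ≤
            Real.exp (c * n^2) * Real.exp (-(c*(2*n+1)) * ((ℓ:ℝ)-1)) * Real.exp (-(c * (j:ℝ)^2)) := by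
          rw [hE, ← Real.exp_add, ← Real.exp_add, ← Real.exp_add]
          apply Real.exp_le_exp.2
          rw [hc]
          have h8 : (0:ℝ) ≤ ((ℓ:ℝ)-1) * ((j:ℝ)^2 - (n:ℝ)^2 - (2*(n:ℝ)+1)) :=
            mul_nonneg (by linarith) (by nlinarith [hjsq])
          have h9 : (0:ℝ) ≤ σ^2/2 := by positivity
          nlinarith [mul_nonneg h9 h8]
        calc E * (Real.exp (-(σ^2/2 * ℓ * (j:ℝ)^2)) * ‖z j‖)
            ≤ E * (Real.exp (-(σ^2/2 * ℓ * (j:ℝ)^2)) * M) :=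
              mul_le_mul_of_nonneg_left
                (mul_le_mul_of_nonneg_left (hM j) (exp_pos _).le) (exp_pos _).le
          _ = M * (E * Real.exp (-(σ^2/2 * ℓ * (j:ℝ)^2))) := by ring
          _ ≤ M * (Real.exp (c * n^2) * Real.exp (-(c*(2*n+1)) * ((ℓ:ℝ)-1)) * Real.exp (-(c * (j:ℝ)^2))) := by
              exact mul_le_mul_of_nonneg_left hexp hM0
          _ = K ℓ * Real.exp (-(c * j^2)) := by rw [hK]; ring
    have hbs : Summable (fun j : ℤ => ‖(E:ℂ) * g2 j‖) :=
      Summable.of_nonneg_of_le (fun _ => norm_nonneg _) hb (hSsum.mul_left (K ℓ))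
    rw [hnorm_eq]
    calc ‖∑' j, (E:ℂ) * g2 j‖ ≤ ∑' j, ‖(E:ℂ) * g2 j‖ := norm_tsum_le_tsum_norm hbs
      _ ≤ ∑' j : ℤ, K ℓ * Real.exp (-(c * j^2)) := Summable.tsum_le_tsum hb hbs (hSsum.mul_left (K ℓ))
      _ = K ℓ * S := by rw [hS, tsum_mul_left]
  -- the bound tends to 0
  have hKS : Tendsto (fun ℓ : ℕ => K ℓ * S) atTop (𝓝 0) := by
    have ha : 0 < c * (2*n+1) := by positivity
    have h1 : Tendsto (fun ℓ : ℕ => ((ℓ:ℝ)-1)) atTop atTop := by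
      have := tendsto_atTop_add_const_right atTop (-1 : ℝ) tendsto_natCast_atTop_atTop
      simpa [sub_eq_add_neg] using this
    have h2 : Tendsto (fun ℓ : ℕ => (c*(2*n+1)) * ((ℓ:ℝ)-1)) atTop atTop :=
      (Tendsto.const_mul_atTop ha h1)
    have h4 : Tendsto (fun ℓ : ℕ => Real.exp (-(c*(2*n+1)) * ((ℓ:ℝ)-1))) atTop (𝓝 0) := by
      have := Real.tendsto_exp_atBot.comp (tendsto_neg_atTop_atBot.comp h2)
      refine this.congr (fun ℓ => ?_)
      simp [Function.comp, neg_mul]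
    have h5 := (h4.const_mul (M * Real.exp (c * n^2) * S))
    rw [mul_zero] at h5
    refine h5.congr (fun ℓ => ?_)
    rw [hK]; ring
  have hA : Tendsto (fun ℓ : ℕ => ‖Complex.exp (((θ * ℓ :ℝ):ℂ) * Complex.I) * z n +
      Complex.exp (((-(θ * ℓ) :ℝ):ℂ) * Complex.I) * d‖) atTop (𝓝 0) :=
    tendsto_of_tendsto_of_tendsto_of_le_of_le' tendsto_const_nhds hKS
      (Eventually.of_forall fun _ => norm_nonneg _) (eventually_atTop.2 ⟨1, key⟩)
  rcases Nat.eq_zero_or_pos n with hn | hn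
  · subst hn
    have : Tendsto (fun _ : ℕ => ‖z ((0:ℕ):ℤ)‖) atTop (𝓝 0) := by
      refine hA.congr (fun ℓ => ?_)
      rw [hθdef, hd]
      norm_num
    have hz0 : z ((0:ℕ):ℤ) = 0 := norm_eq_zero.mp (tendsto_nhds_unique tendsto_const_nhds this)
    constructor
    · exact hz0
    · simpa using hz0
  · have hθne : Complex.exp (((2*θ:ℝ):ℂ) * Complex.I) ≠ 1 := by
      intro hcon
      rcases Complex.exp_eq_one_iff.mp hcon with ⟨m, hm⟩
      have hI : ((2*θ:ℝ):ℂ) = (m:ℂ) * (2 * (π:ℂ)) := by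
        have := hm
        rw [show (m:ℂ) * (2 * (π:ℂ) * Complex.I) = ((m:ℂ) * (2 * (π:ℂ))) * Complex.I by ring] at this
        exact mul_right_cancel₀ Complex.I_ne_zero this
      have hre : 2*θ = (m:ℝ) * (2 * π) := by
        have := congrArg Complex.re hI
        simpa using this
      apply hω ((m : ℚ) / (n : ℚ))
      rw [hθdef] at hre
      have hn0 : ((n:ℚ):ℝ) ≠ 0 := by
        push_cast
        exact_mod_cast (Nat.cast_pos.mpr hn).ne'
      push_cast
      field_simp
      nlinarith [hre]
    have := key_limit θ hθne (z n) d hA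
    refine ⟨this.1, ?_⟩
    have hdz : d = z (-(n:ℤ)) := by rw [hd, if_neg (by omega : ¬ n = 0)]
    rw [← hdz]
    exact this.2

/-- Lemma: for a bounded sequence `{z_k}` the family `{ψ_ℓ(k) z_k}` is absolutely
summable for every `ℓ ≥ 1`, and if all its sums vanish then `z ≡ 0`. -/
theorem psi_determines_coefficients
    (σ ω : ℝ) (hσ : 0 < σ) (hω : ∀ q : ℚ, ω ≠ π * (q : ℝ))
    (z : ℤ → ℂ) (hz : ∃ M : ℝ, ∀ k : ℤ, ‖z k‖ ≤ M) :
    (∀ ℓ : ℕ, 1 ≤ ℓ → Summable (fun k : ℤ => psiCF ω σ ℓ k * z k)) ∧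
    ((∀ ℓ : ℕ, 1 ≤ ℓ → ∑' k : ℤ, psiCF ω σ ℓ k * z k = 0) → ∀ k : ℤ, z k = 0) := by
  obtain ⟨M, hM⟩ := hz
  have hM0 : 0 ≤ M := (norm_nonneg _).trans (hM 0)
  have hc : 0 < σ^2/2 := by positivity
  have hsum : ∀ ℓ : ℕ, 1 ≤ ℓ → Summable (fun k : ℤ => psiCF ω σ ℓ k * z k) := by
    intro ℓ hℓ
    refine Summable.of_norm_bounded (g := fun k : ℤ => M * Real.exp (-(σ^2/2 * k^2)))
      ((summable_gauss _ hc).mul_left M) (fun k => ?_)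
    rw [norm_mul, norm_psiCF]
    have hℓ1 : (1:ℝ) ≤ (ℓ:ℝ) := by exact_mod_cast hℓ
    have h1 : Real.exp (-(σ^2/2 * ℓ * (k:ℝ)^2)) ≤ Real.exp (-(σ^2/2 * (k:ℝ)^2)) := by
      apply Real.exp_le_exp.2
      nlinarith [mul_nonneg (mul_nonneg (by positivity : (0:ℝ) ≤ σ^2/2) (sq_nonneg (k:ℝ)))
        (sub_nonneg.2 hℓ1)]
    calc Real.exp (-(σ^2/2 * ℓ * (k:ℝ)^2)) * ‖z k‖
        ≤ Real.exp (-(σ^2/2 * (k:ℝ)^2)) * M := by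
          have := hM k
          have := exp_pos (-(σ^2/2 * ℓ * (k:ℝ)^2))
          have := exp_pos (-(σ^2/2 * (k:ℝ)^2))
          nlinarith [norm_nonneg (z k)]
      _ = M * Real.exp (-(σ^2/2 * k^2)) := by ring
  refine ⟨hsum, ?_⟩
  intro hzero k
  have main : ∀ n : ℕ, ∀ j : ℤ, j.natAbs < n → z j = 0 := by
    intro n
    induction n with
    | zero => intro j hj; omega
    | succ n ih =>
      intro j hj
      have hstep := step σ ω hσ hω z M hM hsum hzero n ih
      rcases Nat.lt_or_ge j.natAbs n with h | h
      · exact ih j h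
      · have : j.natAbs = n := by omega
        rcases Int.natAbs_eq_iff.mp this with h' | h'
        · rw [h']; exact hstep.1
        · rw [h']; exact hstep.2
  exact main (k.natAbs + 1) k (Nat.lt_succ_self _)
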